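/- (Basepoint independence of minimum homotopy area.) Let C : ℝ → ℂ be a continuous 1-periodic map whose range is Lebesgue-null, and let t₀ ∈ ℝ. Let C_{t₀}(t) = C(t + t₀) be the shifted loop. Then the minimum homotopy area from the path C|[0,1] to the constant path at C(0) equals the minimum homotopy area from the path C_{t₀}|[0,1] to the constant path at C(t₀). -/
import Mathlib


open MeasureTheory unitInterval ENNReal

noncomputable section

/-- `homE H p` is the number of connected components of the fiber `H⁻¹({p})`,
as an extended natural number. -/
def homE {a b : ℂ} {γ₁ γ₂ : Path a b} (H : Path.Homotopy γ₁ γ₂) (p : ℂ) : ℕ∞ :=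
  ENat.card (ConnectedComponents ↥(⇑H ⁻¹' {p}))

/-- The homotopy area `Area(H) = ∫⁻ x, E_H(x)`. -/
def homArea {a b : ℂ} {γ₁ γ₂ : Path a b} (H : Path.Homotopy γ₁ γ₂) : ℝ≥0∞ :=
  ∫⁻ p, (homE H p : ℝ≥0∞)

/-- The minimum homotopy area `σ(γ₁, γ₂)`, the infimum of `Area(H)` over all
homotopies rel endpoints from `γ₁` to `γ₂`. -/
def minHomArea {a b : ℂ} (γ₁ γ₂ : Path a b) : ℝ≥0∞ :=
  ⨅ H : Path.Homotopy γ₁ γ₂, homArea H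

/-- The restriction of a loop `C : ℝ → ℂ` (with `C 0 = C 1 = p`) to `[0,1]`,
as a `Path p p`. -/
def pathOfLoopAt (C : ℝ → ℂ) (p : ℂ) (hC : Continuous C) (h0 : C 0 = p) (h1 : C 1 = p) :
    Path p p where
  toFun t := C t
  continuous_toFun := hC.comp continuous_subtype_val
  source' := by simpa using h0
  target' := by simpa using h1

open Classical in
/-- The winding number `wn(x, C) = (1/(2πi)) ∫₀¹ C′(t)/(C(t) − x) dt` of a loop `C`
about a point `x ∉ C(ℝ)`; it is defined to be `0` for `x ∈ C(ℝ)`. -/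
def windingNumber (C : ℝ → ℂ) (x : ℂ) : ℂ :=
  if x ∈ Set.range C then 0
  else (1 / (2 * (Real.pi : ℂ) * Complex.I)) * ∫ t in (0:ℝ)..1, deriv C t / (C t - x)

/-- The winding area `W(C) = ∫⁻ x, ‖wn(x,C)‖`. -/
def windArea (C : ℝ → ℂ) : ℝ≥0∞ :=
  ∫⁻ x, (‖windingNumber C x‖₊ : ℝ≥0∞)

namespace Stmt18

/-- clamped projection `ℝ → I` -/
noncomputable def pj (r : ℝ) : I := Set.projIcc 0 1 zero_le_one r

lemma continuous_pj : Continuous pj := by unfold pj; exact continuous_projIcc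

lemma pj_coe {r : ℝ} (h0 : 0 ≤ r) (h1 : r ≤ 1) : ((pj r : I) : ℝ) = r := by
  show max 0 (min 1 r) = r
  rw [min_eq_right h1, max_eq_right h0]

lemma pj_val (u : I) : pj (u : ℝ) = u := Subtype.ext (pj_coe u.2.1 u.2.2)

lemma pj_zero : pj 0 = 0 := by simpa using pj_val 0

lemma pj_one : pj 1 = 1 := by simpa using pj_val 1

/-- reparametrization target profile -/
noncomputable def f2 (t₀ t : ℝ) : ℝ :=
  if t ≤ 1/4 then (1-4*t)*t₀ else if t ≤ 1/2 then 4*t-1 else (2*t-1)*t₀+1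

/-- the contraction profile for the final stage -/
noncomputable def wf (t : ℝ) : ℝ :=
  if t ≤ 1/4 then 1-4*t else if t ≤ 1/2 then 0 else 2*t-1

lemma continuous_f2 (t₀ : ℝ) : Continuous (f2 t₀) := by
  unfold f2
  refine Continuous.if_le (by continuity) ?_ continuous_id continuous_const ?_
  · refine Continuous.if_le (by continuity) (by continuity) continuous_id continuous_const ?_
    intro t ht; rw [ht]; norm_num
  · intro t ht; rw [ht]; norm_num

lemma continuous_wf : Continuous wf := by
  unfold wf
  refine Continuous.if_le (by continuity) ?_ continuous_id continuous_const ?_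
  · refine Continuous.if_le continuous_const (by continuity) continuous_id continuous_const ?_
    intro t ht; rw [ht]; norm_num
  · intro t ht; rw [ht]; norm_num

lemma f2_zero (t₀ : ℝ) : f2 t₀ 0 = t₀ := by unfold f2; norm_num

lemma f2_one (t₀ : ℝ) : f2 t₀ 1 = t₀ + 1 := by unfold f2; norm_num

lemma wf_zero : wf 0 = 1 := by unfold wf; norm_num

lemma wf_one : wf 1 = 1 := by unfold wf; norm_num

lemma wf_le_one {t : ℝ} (h0 : 0 ≤ t) (h1 : t ≤ 1) : wf t ≤ 1 := by
  unfold wf; split_ifs <;> linarith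

/-- middle stage: `q⁻¹ ⬝ H(u,·) ⬝ q` -/
noncomputable def Kf (C : ℝ → ℂ) (t₀ : ℝ) {p q : ℂ} (hC : Continuous C)
    (hper : Function.Periodic C 1) (hp : C 0 = p) (h1 : C 1 = p)
    (hq : C t₀ = q) (h1q : C (1 + t₀) = q)
    (H : Path.Homotopy (pathOfLoopAt C p hC hp h1) (Path.refl p)) (u t : ℝ) : ℂ :=
  if t ≤ 1/4 then C ((1-4*t)*t₀) else if t ≤ 1/2 then H (pj u, pj (4*t-1))
  else C ((2*t-1)*t₀+1)

/-- the full shifted nullhomotopy, in real coordinates -/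
noncomputable def Ff (C : ℝ → ℂ) (t₀ : ℝ) {p q : ℂ} (hC : Continuous C)
    (hper : Function.Periodic C 1) (hp : C 0 = p) (h1 : C 1 = p)
    (hq : C t₀ = q) (h1q : C (1 + t₀) = q)
    (H : Path.Homotopy (pathOfLoopAt C p hC hp h1) (Path.refl p)) (s t : ℝ) : ℂ :=
  if s ≤ 1/3 then C ((1-3*s)*(t+t₀) + 3*s * f2 t₀ t)
  else if s ≤ 2/3 then Kf C t₀ hC hper hp h1 hq h1q H (3*s-1) t
  else C (t₀ * max (wf t) (3*s-2))

section Main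

variable {C : ℝ → ℂ} {t₀ : ℝ} {p q : ℂ} (hC : Continuous C)
  (hper : Function.Periodic C 1) (hp : C 0 = p) (h1 : C 1 = p)
  (hq : C t₀ = q) (h1q : C (1 + t₀) = q)
  (H : Path.Homotopy (pathOfLoopAt C p hC hp h1) (Path.refl p))

lemma Kf_zero (t : ℝ) : Kf C t₀ hC hper hp h1 hq h1q H 0 t = C (f2 t₀ t) := by
  unfold Kf f2
  split_ifs with h1t h2t
  · rfl
  · rw [pj_zero, H.apply_zero]
    show C _ = _
    rw [pj_coe (by linarith) (by linarith)]
  · rfl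

lemma Kf_one (t : ℝ) : Kf C t₀ hC hper hp h1 hq h1q H 1 t = C (t₀ * max (wf t) 0) := by
  unfold Kf wf
  split_ifs with h1t h2t
  · rw [max_eq_left (by linarith : (0:ℝ) ≤ 1-4*t)]; ring_nf
  · rw [pj_one, H.apply_one]
    show p = _
    rw [max_self, mul_zero, hp]
  · rw [max_eq_left (by linarith : (0:ℝ) ≤ 2*t-1), mul_comm t₀ (2*t-1)]
    exact hper ((2*t-1)*t₀)

lemma Kf_t0 (u : ℝ) : Kf C t₀ hC hper hp h1 hq h1q H u 0 = C t₀ := by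
  unfold Kf; norm_num

lemma Kf_t1 (u : ℝ) : Kf C t₀ hC hper hp h1 hq h1q H u 1 = C (t₀ + 1) := by
  unfold Kf; norm_num

lemma continuous_Kf :
    Continuous (fun z : ℝ × ℝ => Kf C t₀ hC hper hp h1 hq h1q H z.1 z.2) := by
  unfold Kf
  refine Continuous.if_le (hC.comp (by continuity)) ?_ continuous_snd continuous_const ?_
  · refine Continuous.if_le
      (H.continuous.comp ((continuous_pj.comp continuous_fst).prodMk
        (continuous_pj.comp (by continuity)))) (hC.comp (by continuity))
      continuous_snd continuous_const ?_
    intro z hz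
    rw [hz]
    norm_num
    rw [pj_one, H.target, ← h1]
  · intro z hz
    rw [hz]
    norm_num
    rw [pj_zero, H.source, ← hp]

lemma continuous_Ff :
    Continuous (fun z : ℝ × ℝ => Ff C t₀ hC hper hp h1 hq h1q H z.1 z.2) := by
  unfold Ff
  refine Continuous.if_le
    (hC.comp (by
      have := continuous_f2 t₀
      continuity)) ?_ continuous_fst continuous_const ?_
  · refine Continuous.if_le
      ((continuous_Kf hC hper hp h1 hq h1q H).comp
        ((((continuous_const.mul continuous_fst).sub continuous_const)).prodMk
          continuous_snd))
      (hC.comp (by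
        have := continuous_wf
        continuity)) continuous_fst continuous_const ?_
    intro z hz
    rw [hz]
    norm_num
    exact Kf_one hC hper hp h1 hq h1q H z.2
  · intro z hz
    rw [hz]
    norm_num
    exact (Kf_zero hC hper hp h1 hq h1q H z.2).symm

lemma Ff_s0 {s : ℝ} (hs : s ≤ 1) : Ff C t₀ hC hper hp h1 hq h1q H s 0 = q := by
  unfold Ff
  split_ifs with hs13 hs23
  · rw [f2_zero, show (1-3*s)*(0+t₀) + 3*s*t₀ = t₀ by ring]
    exact hq
  · rw [Kf_t0 hC hper hp h1 hq h1q H]; exact hq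
  · rw [wf_zero, max_eq_left (by linarith : 3*s-2 ≤ 1), mul_one]
    exact hq

lemma Ff_s1 {s : ℝ} (hs : s ≤ 1) : Ff C t₀ hC hper hp h1 hq h1q H s 1 = q := by
  unfold Ff
  split_ifs with hs13 hs23
  · rw [f2_one, show (1-3*s)*(1+t₀) + 3*s*(t₀+1) = 1+t₀ by ring]
    exact h1q
  · rw [Kf_t1 hC hper hp h1 hq h1q H, add_comm]; exact h1q
  · rw [wf_one, max_eq_left (by linarith : 3*s-2 ≤ 1), mul_one]
    exact hq

/-- The shifted nullhomotopy. -/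
noncomputable def shiftHomotopy :
    Path.Homotopy
      (pathOfLoopAt (fun t => C (t + t₀)) q (hC.comp (by continuity))
        (by simpa using hq) h1q)
      (Path.refl q) where
  toFun z := Ff C t₀ hC hper hp h1 hq h1q H (z.1 : ℝ) (z.2 : ℝ)
  continuous_toFun := (continuous_Ff hC hper hp h1 hq h1q H).comp
    ((continuous_subtype_val.comp continuous_fst).prodMk
      (continuous_subtype_val.comp continuous_snd))
  map_zero_left x := by
    show Ff C t₀ hC hper hp h1 hq h1q H ((0:I) : ℝ) (x : ℝ) = C ((x : ℝ) + t₀)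
    unfold Ff
    rw [show ((0:I):ℝ) = 0 from rfl, if_pos (by norm_num : (0:ℝ) ≤ 1/3)]
    norm_num
  map_one_left x := by
    show Ff C t₀ hC hper hp h1 hq h1q H ((1:I) : ℝ) (x : ℝ) = q
    unfold Ff
    rw [show ((1:I):ℝ) = 1 from rfl, if_neg (by norm_num : ¬ ((1:ℝ) ≤ 1/3)),
      if_neg (by norm_num : ¬ ((1:ℝ) ≤ 2/3))]
    rw [show (3*(1:ℝ)-2) = 1 by norm_num, max_eq_right (wf_le_one x.2.1 x.2.2), mul_one]
    exact hq
  prop' s x hx := by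
    simp only [Set.mem_insert_iff, Set.mem_singleton_iff] at hx
    rcases hx with rfl | rfl
    · show Ff C t₀ hC hper hp h1 hq h1q H (s : ℝ) ((0:I) : ℝ) = C (((0:I):ℝ) + t₀)
      rw [show ((0:I):ℝ) = 0 from rfl, Ff_s0 hC hper hp h1 hq h1q H s.2.2, zero_add]
      exact hq.symm
    · show Ff C t₀ hC hper hp h1 hq h1q H (s : ℝ) ((1:I) : ℝ) = C (((1:I):ℝ) + t₀)
      rw [show ((1:I):ℝ) = 1 from rfl, Ff_s1 hC hper hp h1 hq h1q H s.2.2]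
      exact h1q.symm

lemma Ff_phi (u v : I) :
    Ff C t₀ hC hper hp h1 hq h1q H (((u:ℝ)+1)/3) (((v:ℝ)+1)/4) = H (u, v) := by
  unfold Ff
  by_cases hu : u = 0
  · subst hu
    rw [show ((0:I):ℝ) = 0 from rfl]
    rw [if_pos (by norm_num : ((0:ℝ)+1)/3 ≤ 1/3)]
    rw [H.apply_zero]
    show C _ = C (v : ℝ)
    rw [show (1-3*(((0:ℝ)+1)/3)) = 0 by norm_num, show (3*(((0:ℝ)+1)/3)) = 1 by norm_num,
      zero_mul, one_mul, zero_add]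
    by_cases hv : v = 0
    · subst hv
      rw [show ((0:I):ℝ) = 0 from rfl]
      unfold f2
      norm_num
    · have hv' : 0 < (v:ℝ) := lt_of_le_of_ne v.2.1 (fun h => hv (Subtype.ext h.symm))
      unfold f2
      rw [if_neg (by push_neg; linarith), if_pos (by linarith [v.2.2])]
      rw [show 4*(((v:ℝ)+1)/4)-1 = (v:ℝ) by ring]
  · have hu' : 0 < (u:ℝ) := lt_of_le_of_ne u.2.1 (fun h => hu (Subtype.ext h.symm))
    rw [if_neg (by push_neg; linarith), if_pos (by linarith [u.2.2])]
    rw [show 3*(((u:ℝ)+1)/3)-1 = (u:ℝ) by ring]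
    unfold Kf
    by_cases hv : v = 0
    · subst hv
      rw [show ((0:I):ℝ) = 0 from rfl]
      rw [if_pos (by norm_num : ((0:ℝ)+1)/4 ≤ 1/4)]
      rw [H.source]
      rw [show (1-4*(((0:ℝ)+1)/4))*t₀ = 0 by ring]
      exact hp
    · have hv' : 0 < (v:ℝ) := lt_of_le_of_ne v.2.1 (fun h => hv (Subtype.ext h.symm))
      rw [if_neg (by push_neg; linarith), if_pos (by linarith [v.2.2])]
      rw [show 4*(((v:ℝ)+1)/4)-1 = (v:ℝ) by ring, pj_val, pj_val]

lemma Ff_fiber {x : ℂ} (hx : x ∉ Set.range C) {s t : I}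
    (h : Ff C t₀ hC hper hp h1 hq h1q H (s : ℝ) (t : ℝ) = x) :
    ∃ u v : I, ((u:ℝ)+1)/3 = (s:ℝ) ∧ ((v:ℝ)+1)/4 = (t:ℝ) ∧ H (u, v) = x := by
  unfold Ff at h
  split_ifs at h with hs13 hs23
  · exact absurd ⟨_, h⟩ hx
  · unfold Kf at h
    split_ifs at h with ht14 ht12
    · exact absurd ⟨_, h⟩ hx
    · push_neg at hs13 ht14
      refine ⟨pj (3*(s:ℝ)-1), pj (4*(t:ℝ)-1), ?_, ?_, ?_⟩
      · rw [pj_coe (by linarith) (by linarith)]; ring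
      · rw [pj_coe (by linarith) (by linarith)]; ring
      · exact h
    · exact absurd ⟨_, h⟩ hx
  · exact absurd ⟨_, h⟩ hx

lemma cc_card_congr {X Y : Type*} [TopologicalSpace X] [TopologicalSpace Y] (h : X ≃ₜ Y) :
    ENat.card (ConnectedComponents X) = ENat.card (ConnectedComponents Y) := by
  refine ENat.card_congr
    ⟨h.continuous.connectedComponentsMap, h.symm.continuous.connectedComponentsMap, ?_, ?_⟩ <;>
  · intro a
    obtain ⟨x, rfl⟩ := ConnectedComponents.surjective_coe a
    simp [Continuous.connectedComponentsMap, Continuous.connectedComponentsLift_apply_coe]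

lemma homE_shiftHomotopy {x : ℂ} (hx : x ∉ Set.range C) :
    homE (shiftHomotopy hC hper hp h1 hq h1q H) x = homE H x := by
  set H' := shiftHomotopy hC hper hp h1 hq h1q H with hH'
  let A := (⇑H ⁻¹' {x})
  let B := (⇑H' ⁻¹' {x})
  let F : A → B := fun z =>
    ⟨(⟨((z.1.1:ℝ)+1)/3, ⟨by linarith [(z.1.1).2.1], by linarith [(z.1.1).2.2]⟩⟩,
      ⟨((z.1.2:ℝ)+1)/4, ⟨by linarith [(z.1.2).2.1], by linarith [(z.1.2).2.2]⟩⟩),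
      show _ = x from (Ff_phi hC hper hp h1 hq h1q H z.1.1 z.1.2).trans z.2⟩
  have hFinj : Function.Injective F := by
    intro a b hab
    have e1 : (((a.1.1:ℝ))+1)/3 = (((b.1.1:ℝ))+1)/3 :=
      congrArg (fun w : B => ((w.1.1 : I) : ℝ)) hab
    have e2 : (((a.1.2:ℝ))+1)/4 = (((b.1.2:ℝ))+1)/4 :=
      congrArg (fun w : B => ((w.1.2 : I) : ℝ)) hab
    refine Subtype.ext (Prod.ext_iff.mpr ⟨Subtype.ext ?_, Subtype.ext ?_⟩) <;> linarith
  have hFsurj : Function.Surjective F := by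
    intro z
    obtain ⟨u, v, e1, e2, hH⟩ := Ff_fiber hC hper hp h1 hq h1q H hx
      (show Ff C t₀ hC hper hp h1 hq h1q H ((z.1.1 : I) : ℝ) ((z.1.2 : I) : ℝ) = x from z.2)
    exact ⟨⟨(u, v), hH⟩, Subtype.ext (Prod.ext_iff.mpr ⟨Subtype.ext e1, Subtype.ext e2⟩)⟩
  have hFc : Continuous F := by
    refine Continuous.subtype_mk (Continuous.prodMk ?_ ?_) _ <;>
    · refine Continuous.subtype_mk ?_ _
      fun_prop
  haveI : CompactSpace A :=
    isCompact_iff_compactSpace.mp ((isClosed_singleton.preimage H.continuous).isCompact)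
  have hFc' : Continuous (Equiv.ofBijective F ⟨hFinj, hFsurj⟩ : A → B) := hFc
  unfold homE
  exact (cc_card_congr hFc'.homeoOfEquivCompactToT2).symm

lemma homArea_shiftHomotopy (hnull : volume (Set.range C) = 0) :
    homArea (shiftHomotopy hC hper hp h1 hq h1q H) = homArea H := by
  unfold homArea
  refine lintegral_congr_ae ?_
  filter_upwards [measure_eq_zero_iff_ae_notMem.mp hnull] with x hx
  rw [homE_shiftHomotopy hC hper hp h1 hq h1q H hx]

end Main

lemma key (C : ℝ → ℂ) (hC : Continuous C) (hper : Function.Periodic C 1)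
    (hnull : volume (Set.range C) = 0) (t₀ : ℝ) {p q : ℂ}
    (hp : C 0 = p) (h1 : C 1 = p) (hq : C t₀ = q) (h1q : C (1 + t₀) = q)
    (hC' : Continuous fun t : ℝ => C (t + t₀)) (hq0 : C (0 + t₀) = q) :
    minHomArea (pathOfLoopAt (fun t => C (t + t₀)) q hC' (by simpa using hq0) h1q)
        (Path.refl q) ≤
      minHomArea (pathOfLoopAt C p hC hp h1) (Path.refl p) := by
  refine le_iInf fun H => ?_
  exact iInf_le_of_le (shiftHomotopy hC hper hp h1 hq h1q H)
    (le_of_eq (homArea_shiftHomotopy hC hper hp h1 hq h1q H hnull))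

lemma pathOfLoopAt_congr {f g : ℝ → ℂ} {p : ℂ} (h : f = g) (hf : Continuous f)
    (h0 : f 0 = p) (h1 : f 1 = p) (hg : Continuous g) (h0' : g 0 = p) (h1' : g 1 = p) :
    pathOfLoopAt f p hf h0 h1 = pathOfLoopAt g p hg h0' h1' := by
  subst h; rfl

end Stmt18

/-- Basepoint independence of the minimum nullhomotopy area: shifting the parametrization of
a loop with Lebesgue-null range does not change its minimum nullhomotopy area. -/
theorem stmt_18 (C : ℝ → ℂ) (hC : Continuous C) (hper : Function.Periodic C 1)
    (hnull : volume (Set.range C) = 0) (t₀ : ℝ) :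
    minHomArea (pathOfLoopAt C (C 0) hC rfl (by simpa using hper 0)) (Path.refl (C 0)) =
      minHomArea
        (pathOfLoopAt (fun t => C (t + t₀)) (C t₀) (hC.comp (by continuity))
          (by simp) (by simpa [add_comm] using hper t₀))
        (Path.refl (C t₀)) := by
  have h1C : C 1 = C 0 := by simpa using hper 0
  have h1q : C (1 + t₀) = C t₀ := by rw [add_comm]; exact hper t₀
  refine le_antisymm ?_ ?_
  · -- original ≤ shifted: apply key to the shifted loop with shift `-t₀`
    have hC1 : Continuous (fun t : ℝ => C (t + t₀)) := hC.comp (by continuity)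
    have hper1 : Function.Periodic (fun t : ℝ => C (t + t₀)) 1 := by
      intro x
      show C (x + 1 + t₀) = C (x + t₀)
      rw [show x + 1 + t₀ = (x + t₀) + 1 by ring]
      exact hper (x + t₀)
    have hnull1 : volume (Set.range (fun t : ℝ => C (t + t₀))) = 0 := by
      have hs : Function.Surjective (fun t : ℝ => t + t₀) := fun y => ⟨y - t₀, by ring⟩
      have hr : Set.range (fun t : ℝ => C (t + t₀)) = Set.range C := hs.range_comp C
      rw [hr]; exact hnull
    have happ := Stmt18.key (fun t : ℝ => C (t + t₀)) hC1 hper1 hnull1 (-t₀)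
      (p := C t₀) (q := C 0)
      (show C (0 + t₀) = C t₀ by rw [zero_add])
      (show C (1 + t₀) = C t₀ from h1q)
      (show C (-t₀ + t₀) = C 0 by rw [neg_add_cancel])
      (show C (1 + -t₀ + t₀) = C 0 by rw [show (1:ℝ) + -t₀ + t₀ = 1 by ring]; exact h1C)
      ((hC1.comp (by continuity) : Continuous fun t : ℝ => C (t + -t₀ + t₀)))
      (show C (0 + -t₀ + t₀) = C 0 by rw [show (0:ℝ) + -t₀ + t₀ = 0 by ring])
    refine le_trans (le_of_eq ?_) happ
    exact congrArg (fun γ => minHomArea γ (Path.refl (C 0)))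
      (Stmt18.pathOfLoopAt_congr
        (funext fun t => (congrArg C (by ring : t + -t₀ + t₀ = t)).symm) _ _ _ _ _ _)
  · exact Stmt18.key C hC hper hnull t₀ rfl h1C rfl h1q (hC.comp (by continuity))
      (by rw [zero_add])
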